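/- Let c = 2 - √3. Then c is the unique maximum point of p_3 on [0,1], and for every n ≥ 3 the polynomial p_n is strictly increasing on [0, c]; in particular p_n(u) < p_n(v) whenever 0 ≤ u < v ≤ c and n ≥ 3. -/

import Mathlib

open Finset Real

/-- `p_n(x) = 1 - x - Σ_{k=2}^{n} (1-x)^k/(k(k-1))`. -/
noncomputable def pwin (n : ℕ) (x : ℝ) : ℝ :=
  1 - x - ∑ k ∈ Finset.Icc 2 n, (1 - x) ^ k / ((k : ℝ) * ((k : ℝ) - 1))

lemma pwin_hasDerivAt (n : ℕ) (x : ℝ) :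
    HasDerivAt (pwin n)
      (-1 + ∑ k ∈ Finset.Icc 2 n, (1 - x) ^ (k - 1) / ((k : ℝ) - 1)) x := by
  have h1 : HasDerivAt (fun x : ℝ => 1 - x) (-1) x := by
    simpa using (hasDerivAt_id x).const_sub 1
  have hsum : HasDerivAt
      (fun x : ℝ => ∑ k ∈ Finset.Icc 2 n, (1 - x) ^ k / ((k : ℝ) * ((k : ℝ) - 1)))
      (∑ k ∈ Finset.Icc 2 n, -((1 - x) ^ (k - 1) / ((k : ℝ) - 1))) x := by
    apply HasDerivAt.fun_sum
    intro k hk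
    have hk2 : 2 ≤ k := (Finset.mem_Icc.mp hk).1
    have hk0 : (k : ℝ) ≠ 0 := by positivity
    have hk1 : (k : ℝ) - 1 ≠ 0 := by
      have : (2 : ℝ) ≤ (k : ℝ) := by exact_mod_cast hk2
      nlinarith
    have h := (h1.fun_pow k).div_const ((k : ℝ) * ((k : ℝ) - 1))
    convert h using 1
    · rfl
    field_simp
  have h := h1.sub hsum
  have heq : (-1 : ℝ) + ∑ k ∈ Finset.Icc 2 n, (1 - x) ^ (k - 1) / ((k : ℝ) - 1)
      = -1 - ∑ k ∈ Finset.Icc 2 n, -((1 - x) ^ (k - 1) / ((k : ℝ) - 1)) := by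
    rw [Finset.sum_neg_distrib]; ring
  rw [heq]
  exact h

lemma sqrt3_lt_two : Real.sqrt 3 < 2 := by
  nlinarith [Real.sq_sqrt (show (0:ℝ) ≤ 3 by norm_num), Real.sqrt_nonneg 3]

lemma one_le_sqrt3 : (1 : ℝ) ≤ Real.sqrt 3 := by
  nlinarith [Real.sq_sqrt (show (0:ℝ) ≤ 3 by norm_num), Real.sqrt_nonneg 3]

lemma deriv_pos (n : ℕ) (hn : 3 ≤ n) {x : ℝ} (hx0 : 0 < x) (hxc : x < 2 - Real.sqrt 3) :
    0 < -1 + ∑ k ∈ Finset.Icc 2 n, (1 - x) ^ (k - 1) / ((k : ℝ) - 1) := by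
  have hx1 : x < 1 := by nlinarith [one_le_sqrt3]
  have hsub : Finset.Icc (2:ℕ) 3 ⊆ Finset.Icc 2 n := Finset.Icc_subset_Icc_right hn
  have hle : ∑ k ∈ Finset.Icc (2:ℕ) 3, (1 - x) ^ (k - 1) / ((k : ℝ) - 1)
      ≤ ∑ k ∈ Finset.Icc 2 n, (1 - x) ^ (k - 1) / ((k : ℝ) - 1) := by
    apply Finset.sum_le_sum_of_subset_of_nonneg hsub
    intro k hk _
    have hk2 : 2 ≤ k := (Finset.mem_Icc.mp hk).1
    have hk1 : (0 : ℝ) < (k : ℝ) - 1 := by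
      have : (2 : ℝ) ≤ (k : ℝ) := by exact_mod_cast hk2
      linarith
    have : (0 : ℝ) ≤ (1 - x) ^ (k - 1) := pow_nonneg (by linarith) _
    positivity
  have h3 : ∑ k ∈ Finset.Icc (2:ℕ) 3, (1 - x) ^ (k - 1) / ((k : ℝ) - 1)
      = (1 - x) + (1 - x) ^ 2 / 2 := by
    rw [show Finset.Icc (2:ℕ) 3 = {2, 3} by rfl]
    norm_num
  have hpos : 0 < -1 + ((1 - x) + (1 - x) ^ 2 / 2) := by
    have hs := Real.sq_sqrt (show (0:ℝ) ≤ 3 by norm_num)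
    have h1 : 0 < 2 - Real.sqrt 3 - x := by linarith
    have h2 : 0 < 2 + Real.sqrt 3 - x := by nlinarith [Real.sqrt_nonneg 3]
    nlinarith [mul_pos h1 h2]
  linarith [hle, h3 ▸ hpos]

lemma deriv3_neg {x : ℝ} (hxc : 2 - Real.sqrt 3 < x) (hx1 : x < 1) :
    -1 + ∑ k ∈ Finset.Icc (2:ℕ) 3, (1 - x) ^ (k - 1) / ((k : ℝ) - 1) < 0 := by
  have h3 : ∑ k ∈ Finset.Icc (2:ℕ) 3, (1 - x) ^ (k - 1) / ((k : ℝ) - 1)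
      = (1 - x) + (1 - x) ^ 2 / 2 := by
    rw [show Finset.Icc (2:ℕ) 3 = {2, 3} by rfl]
    norm_num
  rw [h3]
  have hs := Real.sq_sqrt (show (0:ℝ) ≤ 3 by norm_num)
  have h1 : x - (2 - Real.sqrt 3) > 0 := by linarith
  have h2 : 0 < 2 + Real.sqrt 3 - x := by nlinarith [Real.sqrt_nonneg 3]
  nlinarith [mul_pos h1 h2]

lemma pwin_strictMonoOn (n : ℕ) (hn : 3 ≤ n) :
    StrictMonoOn (pwin n) (Set.Icc (0:ℝ) (2 - Real.sqrt 3)) := by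
  have hdiff : ∀ x : ℝ, DifferentiableAt ℝ (pwin n) x :=
    fun x => (pwin_hasDerivAt n x).differentiableAt
  apply strictMonoOn_of_deriv_pos (convex_Icc _ _)
  · exact (Differentiable.continuous hdiff).continuousOn
  · intro x hx
    rw [interior_Icc] at hx
    rw [(pwin_hasDerivAt n x).deriv]
    exact deriv_pos n hn hx.1 hx.2

lemma pwin3_strictAntiOn :
    StrictAntiOn (pwin 3) (Set.Icc (2 - Real.sqrt 3) 1) := by
  have hdiff : ∀ x : ℝ, DifferentiableAt ℝ (pwin 3) x :=
    fun x => (pwin_hasDerivAt 3 x).differentiableAt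
  apply strictAntiOn_of_deriv_neg (convex_Icc _ _)
  · exact (Differentiable.continuous hdiff).continuousOn
  · intro x hx
    rw [interior_Icc] at hx
    rw [(pwin_hasDerivAt 3 x).deriv]
    exact deriv3_neg hx.1 hx.2

theorem stmt16 :
    IsMaxOn (pwin 3) (Set.Icc (0:ℝ) 1) (2 - Real.sqrt 3) ∧
    (∀ y ∈ Set.Icc (0:ℝ) 1, IsMaxOn (pwin 3) (Set.Icc (0:ℝ) 1) y → y = 2 - Real.sqrt 3) ∧
    (∀ n : ℕ, 3 ≤ n → StrictMonoOn (pwin n) (Set.Icc (0:ℝ) (2 - Real.sqrt 3))) ∧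
    (∀ n : ℕ, 3 ≤ n → ∀ u v : ℝ, 0 ≤ u → u < v → v ≤ 2 - Real.sqrt 3 →
      pwin n u < pwin n v) := by
  set c := 2 - Real.sqrt 3 with hc
  have hc0 : 0 < c := by have := sqrt3_lt_two; simp [hc]; linarith
  have hc1 : c ≤ 1 := by have := one_le_sqrt3; simp [hc]; linarith
  have hmono := pwin_strictMonoOn 3 le_rfl
  have hanti := pwin3_strictAntiOn
  have hcmem : c ∈ Set.Icc (0:ℝ) 1 := ⟨le_of_lt hc0, hc1⟩
  have hmax : IsMaxOn (pwin 3) (Set.Icc (0:ℝ) 1) c := by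
    intro x hx
    simp only [Set.mem_Icc] at hx
    rcases le_or_gt x c with h | h
    · exact hmono.monotoneOn ⟨hx.1, h⟩ ⟨le_of_lt hc0, le_rfl⟩ h
    · exact le_of_lt (hanti ⟨le_rfl, hc1⟩ ⟨le_of_lt h, hx.2⟩ h)
  refine ⟨hmax, ?_, fun n hn => pwin_strictMonoOn n hn, ?_⟩
  · intro y hy hymax
    simp only [Set.mem_Icc] at hy
    by_contra hne
    rcases lt_or_gt_of_ne hne with h | h
    · have hlt : pwin 3 y < pwin 3 c :=
        hmono ⟨hy.1, le_of_lt h⟩ ⟨le_of_lt hc0, le_rfl⟩ h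
      have := hymax hcmem
      simp only [Set.mem_setOf_eq] at this
      linarith
    · have hlt : pwin 3 y < pwin 3 c :=
        hanti ⟨le_rfl, hc1⟩ ⟨le_of_lt h, hy.2⟩ h
      have := hymax hcmem
      simp only [Set.mem_setOf_eq] at this
      linarith
  · intro n hn u v hu huv hv
    exact pwin_strictMonoOn n hn ⟨hu, le_trans (le_of_lt huv) hv⟩ ⟨le_trans hu (le_of_lt huv), hv⟩ huv
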